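/- Let (X,d,W) be a UCW-hyperbolic space with monotone modulus of uniform convexity η, C ⊆ X a nonempty convex subset, T : C → C nonexpansive with a fixed point, and (λ_n),(s_n) sequences in [0,1] such that Σ_{n=0}^∞ λ_n(1−λ_n) diverges, limsup_n s_n < 1 and Σ_{n=0}^∞ s_n(1−λ_n) converges. Let (x_n) be the Ishikawa iteration starting with x ∈ C. Then lim_{n→∞} d(x_n, Tx_n) = 0. Moreover, if θ : ℕ → ℕ is a rate of divergence for Σ_{n=0}^∞ λ_n(1−λ_n), L, N_0 ∈ ℕ are such that s_n ≤ 1 − 1/L for all n ≥ N_0, γ is a Cauchy modulus for Σ_{n=0}^∞ s_n(1−λ_n), and b > 0 satisfies b ≥ d(x,p) for some fixed point p of T, then for all ε > 0 and all n ≥ Φ(ε,η,b,θ,L,N_0,γ) one has d(x_n, Tx_n) < ε, where Φ(ε,η,b,θ,L,N_0,γ) := θ(⌈2L(b+1)/(ε·η(b, ε/(2Lb)))⌉ + γ(ε/(8b)) + N_0 + 1) if ε ≤ 4Lb, and Φ(ε,η,b,θ,L,N_0,γ) := γ(ε/(8b)) + N_0 + 1 otherwise. -/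

import Mathlib

open Set Filter Metric Bornology Function

/-- A `W`-hyperbolic space structure on a metric space `X` (Kohlenbach).
`W x y l` denotes `(1-l)x ⊕ l y`. -/
structure WHyp (X : Type*) [MetricSpace X] where
  W : X → X → ℝ → X
  W1 : ∀ (x y z : X), ∀ l ∈ Set.Icc (0:ℝ) 1,
    dist z (W x y l) ≤ (1 - l) * dist z x + l * dist z y
  W2 : ∀ (x y : X), ∀ l ∈ Set.Icc (0:ℝ) 1, ∀ l' ∈ Set.Icc (0:ℝ) 1,
    dist (W x y l) (W x y l') = |l - l'| * dist x y
  W3 : ∀ (x y : X), ∀ l ∈ Set.Icc (0:ℝ) 1, W x y l = W y x (1 - l)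
  W4 : ∀ (x y z w : X), ∀ l ∈ Set.Icc (0:ℝ) 1,
    dist (W x z l) (W y w l) ≤ (1 - l) * dist x y + l * dist z w

/-- `η` is a modulus of uniform convexity for the `W`-hyperbolic space `H`. -/
def WHyp.UnifConvex {X : Type*} [MetricSpace X] (H : WHyp X) (η : ℝ → ℝ → ℝ) : Prop :=
  (∀ r ε : ℝ, 0 < r → ε ∈ Set.Ioc (0:ℝ) 2 → η r ε ∈ Set.Ioc (0:ℝ) 1) ∧
  (∀ (r ε : ℝ) (a x y : X), 0 < r → ε ∈ Set.Ioc (0:ℝ) 2 →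
    dist x a ≤ r → dist y a ≤ r → ε * r ≤ dist x y →
    dist (H.W x y (1/2)) a ≤ (1 - η r ε) * r)

/-- A modulus of uniform convexity is monotone if it decreases in `r` for fixed `ε`. -/
def MonotoneModulus (η : ℝ → ℝ → ℝ) : Prop :=
  ∀ r s ε : ℝ, 0 < r → r ≤ s → ε ∈ Set.Ioc (0:ℝ) 2 → η s ε ≤ η r ε

/-- A subset `C` is convex in the `W`-hyperbolic space `H`. -/
def WHyp.ConvexSet {X : Type*} [MetricSpace X] (H : WHyp X) (C : Set X) : Prop :=
  ∀ x ∈ C, ∀ y ∈ C, ∀ l ∈ Set.Icc (0:ℝ) 1, H.W x y l ∈ C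

/-- The Ishikawa iteration: `x₀ = x`,
`x_{n+1} = (1-λ_n)x_n ⊕ λ_n T((1-s_n)x_n ⊕ s_n T x_n)`. -/
def WHyp.ishSeq {X : Type*} [MetricSpace X] (H : WHyp X) (T : X → X) (l s : ℕ → ℝ)
    (x : X) : ℕ → X
  | 0 => x
  | n + 1 =>
      H.W (H.ishSeq T l s x n)
        (T (H.W (H.ishSeq T l s x n) (T (H.ishSeq T l s x n)) (s n))) (l n)

namespace WHyp

variable {X : Type*} [MetricSpace X] (H : WHyp X)

lemma W_zero (x y : X) : H.W x y 0 = x := by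
  have h := H.W1 x y x 0 (by constructor <;> norm_num)
  simp at h
  exact h.symm

lemma W_one (x y : X) : H.W x y 1 = y := by
  rw [H.W3 x y 1 (by constructor <;> norm_num)]
  simpa using H.W_zero y x

lemma dist_left (x y : X) {l : ℝ} (hl : l ∈ Set.Icc (0:ℝ) 1) :
    dist x (H.W x y l) = l * dist x y := by
  have h := H.W2 x y l hl 0 (by constructor <;> norm_num)
  rw [H.W_zero, sub_zero, abs_of_nonneg hl.1] at h
  rw [dist_comm]; exact h

lemma dist_right (x y : X) {l : ℝ} (hl : l ∈ Set.Icc (0:ℝ) 1) :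
    dist (H.W x y l) y = (1 - l) * dist x y := by
  have h := H.W2 x y l hl 1 (by constructor <;> norm_num)
  rw [H.W_one] at h
  rw [h, abs_of_nonpos (by linarith [hl.2])]
  ring

/-- In a uniformly convex space, a point metrically between `x` and `y` at a
given distance from `x` is unique. -/
lemma between_unique {η : ℝ → ℝ → ℝ} (hU : H.UnifConvex η) {x y z w : X}
    (h1 : dist x z + dist z y ≤ dist x y) (h2 : dist x w + dist w y ≤ dist x y)
    (h3 : dist x z = dist x w) : z = w := by
  rcases eq_or_lt_of_le (dist_nonneg : (0:ℝ) ≤ dist x z) with h0 | h0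
  · have hz : z = x := by rw [← dist_le_zero, dist_comm]; exact le_of_eq h0.symm
    have hw : w = x := by rw [← dist_le_zero, dist_comm, ← h3]; exact le_of_eq h0.symm
    rw [hz, hw]
  · by_contra hne
    set t := dist x z with ht
    set m := H.W z w (1/2) with hm
    have h12 : (1/2 : ℝ) ∈ Set.Icc (0:ℝ) 1 := by constructor <;> norm_num
    have hmx : dist x m ≤ t := by
      have h' := H.W1 z w x (1/2) h12
      calc dist x m ≤ (1 - 1/2) * dist x z + (1/2) * dist x w := h'
        _ = t := by rw [← ht, ← h3]; ring
    have hmy : dist m y ≤ dist x y - t := by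
      have := H.W1 z w y (1/2) h12
      have hzy : dist z y ≤ dist x y - t := by linarith
      have hwy : dist w y ≤ dist x y - t := by rw [← h3] at h2; linarith
      calc dist m y = dist y m := dist_comm _ _
        _ ≤ (1 - 1/2) * dist y z + (1/2) * dist y w := this
        _ = (1/2) * dist z y + (1/2) * dist w y := by rw [dist_comm y z, dist_comm y w]; ring
        _ ≤ dist x y - t := by linarith
    have hmx' : t ≤ dist x m := by
      have := dist_triangle x m y
      linarith
    -- uniform convexity contradiction
    have hδ : 0 < dist z w := dist_pos.mpr hne
    have hδ2 : dist z w ≤ 2 * t := by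
      have := dist_triangle z x w
      rw [dist_comm z x, ← h3] at this
      linarith
    set ε := min 2 (dist z w / t) with hε
    have hεIoc : ε ∈ Set.Ioc (0:ℝ) 2 :=
      ⟨lt_min (by norm_num) (div_pos hδ h0), min_le_left _ _⟩
    have hεt : ε * t ≤ dist z w := by
      rcases le_total (dist z w / t) 2 with hc | hc
      · have he : ε = dist z w / t := min_eq_right hc
        rw [he]; field_simp; norm_num
      · have he : ε = 2 := min_eq_left hc
        have : 2 * t ≤ dist z w := by
          rw [le_div_iff₀ h0] at hc; linarith
        rw [he]; linarith
    have huc := hU.2 t ε x z w h0 hεIoc (by rw [dist_comm]) (by rw [dist_comm, ← h3]) hεt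
    have hη := (hU.1 t ε h0 hεIoc).1
    have : dist m x ≤ (1 - η t ε) * t := huc
    rw [dist_comm] at this
    nlinarith
  
lemma W_double {η : ℝ → ℝ → ℝ} (hU : H.UnifConvex η) (x y : X) {l : ℝ}
    (hl0 : 0 ≤ l) (hl2 : l ≤ 1/2) :
    H.W x (H.W x y (1/2)) (2*l) = H.W x y l := by
  have h12 : (1/2 : ℝ) ∈ Set.Icc (0:ℝ) 1 := by constructor <;> norm_num
  have h2l : (2*l) ∈ Set.Icc (0:ℝ) 1 := ⟨by linarith, by linarith⟩
  have hll : l ∈ Set.Icc (0:ℝ) 1 := ⟨hl0, by linarith⟩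
  set m := H.W x y (1/2) with hm
  set z := H.W x m (2*l) with hz
  set d := dist x y with hd
  have hxm : dist x m = (1/2) * d := H.dist_left x y h12
  have hmy : dist m y = (1/2) * d := by
    have := H.dist_right x y h12; rw [this, ← hd]; ring
  have hxz : dist x z = l * d := by
    rw [hz, H.dist_left x m h2l, hxm]; ring
  have hzm : dist z m = (1 - 2*l) * ((1/2)*d) := by
    rw [hz, H.dist_right x m h2l, hxm]
  have hzy : dist z y ≤ (1 - l) * d := by
    calc dist z y ≤ dist z m + dist m y := dist_triangle _ _ _
      _ = (1 - l) * d := by rw [hzm, hmy]; ring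
  have hxw : dist x (H.W x y l) = l * d := H.dist_left x y hll
  have hwy : dist (H.W x y l) y = (1 - l) * d := H.dist_right x y hll
  apply H.between_unique hU (y := y)
  · rw [hxz]; linarith
  · rw [hxw, hwy]; linarith [dist_nonneg (x := x) (y := y)]
  · rw [hxz, hxw]

/-- Uniform convexity at a general parameter `l ∈ [0,1]`. -/
lemma uc_general {η : ℝ → ℝ → ℝ} (hU : H.UnifConvex η) {r ε : ℝ} (a x y : X)
    (hr : 0 < r) (hε : ε ∈ Set.Ioc (0:ℝ) 2) {l : ℝ} (hl : l ∈ Set.Icc (0:ℝ) 1)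
    (hxa : dist x a ≤ r) (hya : dist y a ≤ r) (hxy : ε * r ≤ dist x y) :
    dist (H.W x y l) a ≤ (1 - 2*l*(1-l) * η r ε) * r := by
  have hη := hU.1 r ε hr hε
  -- reduce to the case l ≤ 1/2
  have key : ∀ x y : X, ∀ l : ℝ, 0 ≤ l → l ≤ 1/2 →
      dist x a ≤ r → dist y a ≤ r → ε * r ≤ dist x y →
      dist (H.W x y l) a ≤ (1 - 2*l*(1-l) * η r ε) * r := by
    intro x y l hl0 hl2 hxa hya hxy
    have h12 : (1/2 : ℝ) ∈ Set.Icc (0:ℝ) 1 := by constructor <;> norm_num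
    have h2l : (2*l) ∈ Set.Icc (0:ℝ) 1 := ⟨by linarith, by linarith⟩
    have hmid := hU.2 r ε a x y hr hε hxa hya hxy
    rw [← H.W_double hU x y hl0 hl2]
    have h1 := H.W1 x (H.W x y (1/2)) a (2*l) h2l
    have hax : dist a x ≤ r := by rw [dist_comm]; exact hxa
    have ham : dist a (H.W x y (1/2)) ≤ (1 - η r ε) * r := by rw [dist_comm]; exact hmid
    have hetar : 0 ≤ (1 - η r ε) * r := mul_nonneg (by linarith [hη.2]) hr.le
    have : dist a (H.W x (H.W x y (1/2)) (2*l)) ≤ (1 - 2*l) * r + 2*l * ((1 - η r ε) * r) := by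
      refine h1.trans ?_
      have t1 : (1 - 2*l) * dist a x ≤ (1 - 2*l) * r :=
        mul_le_mul_of_nonneg_left hax (by linarith)
      have t2 : 2*l * dist a (H.W x y (1/2)) ≤ 2*l * ((1 - η r ε) * r) :=
        mul_le_mul_of_nonneg_left ham (by linarith)
      linarith
    rw [dist_comm]
    calc dist a (H.W x (H.W x y (1/2)) (2*l)) ≤ (1 - 2*l) * r + 2*l * ((1 - η r ε) * r) := this
      _ ≤ (1 - 2*l*(1-l) * η r ε) * r := by
          nlinarith [mul_nonneg (mul_nonneg (mul_nonneg hl0 hl0) hη.1.le) hr.le]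
  rcases le_total l (1/2) with h | h
  · exact key x y l hl.1 h hxa hya hxy
  · rw [H.W3 x y l hl]
    have := key y x (1-l) (by linarith [hl.2]) (by linarith) hya hxa (by rw [dist_comm]; exact hxy)
    calc dist (H.W y x (1-l)) a ≤ (1 - 2*(1-l)*(1-(1-l)) * η r ε) * r := this
      _ = (1 - 2*l*(1-l) * η r ε) * r := by ring_nf

end WHyp

set_option maxHeartbeats 2000000 in
theorem stmt19 {X : Type*} [MetricSpace X] (H : WHyp X)
    (η : ℝ → ℝ → ℝ) (hU : H.UnifConvex η) (hmon : MonotoneModulus η)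
    (C : Set X) (hCne : C.Nonempty) (hCconv : H.ConvexSet C)
    (T : X → X) (hT : Set.MapsTo T C C)
    (hTne : ∀ x ∈ C, ∀ y ∈ C, dist (T x) (T y) ≤ dist x y)
    (hfix : ∃ p ∈ C, T p = p)
    (l s : ℕ → ℝ) (hl : ∀ n, l n ∈ Set.Icc (0:ℝ) 1) (hs : ∀ n, s n ∈ Set.Icc (0:ℝ) 1)
    (x : X) (hx : x ∈ C)
    (xs : ℕ → X) (hxs : xs = H.ishSeq T l s x)
    (ys : ℕ → X) (hys : ∀ n, ys n = H.W (xs n) (T (xs n)) (s n))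
    (hdiv : ¬ Summable fun n => l n * (1 - l n))
    (hslim : Filter.limsup s Filter.atTop < 1)
    (hconv : Summable fun n => s n * (1 - l n)) :
    Filter.Tendsto (fun n => dist (xs n) (T (xs n))) Filter.atTop (nhds 0) ∧
    ∀ θ : ℕ → ℕ,
      (∀ n : ℕ, (n : ℝ) ≤ ∑ i ∈ Finset.range (θ n + 1), l i * (1 - l i)) →
      ∀ L N₀ : ℕ, 1 ≤ L → (∀ n ≥ N₀, s n ≤ 1 - 1 / (L : ℝ)) →
      ∀ γ : ℝ → ℕ,
        (∀ ε : ℝ, 0 < ε → ∀ m : ℕ,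
          |(∑ i ∈ Finset.range (γ ε + m + 1), s i * (1 - l i)) -
            ∑ i ∈ Finset.range (γ ε + 1), s i * (1 - l i)| < ε) →
      ∀ b : ℝ, 0 < b → (∃ p ∈ C, T p = p ∧ dist x p ≤ b) →
      ∀ ε : ℝ, 0 < ε → ∀ n : ℕ,
        (if ε ≤ 4 * L * b then
          θ (⌈2 * L * (b + 1) / (ε * η b (ε / (2 * L * b)))⌉₊ + γ (ε / (8 * b)) + N₀ + 1)
        else γ (ε / (8 * b)) + N₀ + 1) ≤ n →
        dist (xs n) (T (xs n)) < ε := by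
  classical
  -- basic numeric facts
  have hl0 : ∀ n, 0 ≤ l n := fun n => (hl n).1
  have hl1 : ∀ n, l n ≤ 1 := fun n => (hl n).2
  have hs0 : ∀ n, 0 ≤ s n := fun n => (hs n).1
  have hs1 : ∀ n, s n ≤ 1 := fun n => (hs n).2
  have hslnn : ∀ n, 0 ≤ s n * (1 - l n) := fun n =>
    mul_nonneg (hs0 n) (by linarith [hl1 n])
  have hllnn : ∀ n, 0 ≤ l n * (1 - l n) := fun n =>
    mul_nonneg (hl0 n) (by linarith [hl1 n])
  have hll1 : ∀ n, l n * (1 - l n) ≤ 1 := fun n => by nlinarith [hl0 n, hl1 n]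
  -- recurrence and membership
  have hx0 : xs 0 = x := by rw [hxs]; rfl
  have hrec : ∀ n, xs (n+1) = H.W (xs n) (T (ys n)) (l n) := by
    intro n; rw [hys n, hxs]; rfl
  have hxC : ∀ n, xs n ∈ C := by
    intro n; induction n with
    | zero => rw [hx0]; exact hx
    | succ n ih =>
        rw [hrec n]
        have hyn : ys n ∈ C := by
          rw [hys n]; exact hCconv _ ih _ (hT ih) _ (hs n)
        exact hCconv _ ih _ (hT hyn) _ (hl n)
  have hyC : ∀ n, ys n ∈ C := by
    intro n; rw [hys n]; exact hCconv _ (hxC n) _ (hT (hxC n)) _ (hs n)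
  -- Fejér monotonicity facts, parametric in the fixed point
  have hyp_le : ∀ p ∈ C, T p = p → ∀ n, dist (ys n) p ≤ dist (xs n) p := by
    intro p hpC hTp n
    have h1 := H.W1 (xs n) (T (xs n)) p (s n) (hs n)
    have h2 : dist (T (xs n)) p ≤ dist (xs n) p := by
      have := hTne (xs n) (hxC n) p hpC
      rw [hTp] at this; exact this
    rw [hys n, dist_comm]
    rw [dist_comm p (xs n), dist_comm p (T (xs n))] at h1
    nlinarith [hs0 n, hs1 n]
  have hdec : ∀ p ∈ C, T p = p → ∀ n, dist (xs (n+1)) p ≤ dist (xs n) p := by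
    intro p hpC hTp n
    have h1 := H.W1 (xs n) (T (ys n)) p (l n) (hl n)
    have h2 : dist (T (ys n)) p ≤ dist (ys n) p := by
      have := hTne (ys n) (hyC n) p hpC
      rw [hTp] at this; exact this
    have h3 := hyp_le p hpC hTp n
    rw [hrec n, dist_comm]
    rw [dist_comm p (xs n), dist_comm p (T (ys n))] at h1
    nlinarith [hl0 n, hl1 n]
  have hdb : ∀ p ∈ C, T p = p → ∀ n, dist (xs n) p ≤ dist x p := by
    intro p hpC hTp n
    induction n with
    | zero => rw [hx0]
    | succ n ih => exact (hdec p hpC hTp n).trans ih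
  have hc2 : ∀ p ∈ C, T p = p → ∀ n,
      dist (xs n) (T (xs n)) ≤ 2 * dist (xs n) p := by
    intro p hpC hTp n
    have h2 : dist (T (xs n)) p ≤ dist (xs n) p := by
      have := hTne (xs n) (hxC n) p hpC
      rw [hTp] at this; exact this
    have := dist_triangle (xs n) p (T (xs n))
    rw [dist_comm p (T (xs n))] at this
    linarith
  -- (F2): one-step control of dist (xs n) (T (xs n))
  have hF2 : ∀ n, dist (xs (n+1)) (T (xs (n+1))) ≤
      dist (xs n) (T (xs n)) + 2 * (s n * (1 - l n)) * dist (xs n) (T (xs n)) := by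
    intro n
    set cn := dist (xs n) (T (xs n)) with hcn
    have hA : dist (xs (n+1)) (T (ys n)) = (1 - l n) * dist (xs n) (T (ys n)) := by
      rw [hrec n]; exact H.dist_right _ _ (hl n)
    have hB : dist (T (ys n)) (T (xs (n+1))) ≤ dist (ys n) (xs (n+1)) :=
      hTne _ (hyC n) _ (hxC (n+1))
    have hC1 : dist (ys n) (xs (n+1)) ≤
        (1 - l n) * dist (ys n) (xs n) + l n * dist (ys n) (T (ys n)) := by
      rw [hrec n]
      exact H.W1 (xs n) (T (ys n)) (ys n) (l n) (hl n)
    have hD : dist (ys n) (xs n) = s n * cn := by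
      rw [hys n, dist_comm]; exact H.dist_left _ _ (hs n)
    have hE : dist (ys n) (T (xs n)) = (1 - s n) * cn := by
      rw [hys n]; exact H.dist_right _ _ (hs n)
    have hF : dist (T (xs n)) (T (ys n)) ≤ s n * cn := by
      have h := hTne (xs n) (hxC n) (ys n) (hyC n)
      have h2 : dist (xs n) (ys n) = s n * cn := by rw [dist_comm]; exact hD
      calc dist (T (xs n)) (T (ys n)) ≤ dist (xs n) (ys n) := h
        _ = s n * cn := h2
    have hG : dist (ys n) (T (ys n)) ≤ cn := by
      calc dist (ys n) (T (ys n)) ≤ dist (ys n) (T (xs n)) + dist (T (xs n)) (T (ys n)) :=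
            dist_triangle _ _ _
        _ ≤ (1 - s n) * cn + s n * cn := by rw [hE]; linarith [hF]
        _ = cn := by ring
    have hH : dist (xs n) (T (ys n)) ≤ (1 + s n) * cn := by
      calc dist (xs n) (T (ys n)) ≤ dist (xs n) (T (xs n)) + dist (T (xs n)) (T (ys n)) :=
            dist_triangle _ _ _
        _ ≤ cn + s n * cn := by rw [← hcn]; linarith [hF]
        _ = (1 + s n) * cn := by ring
    have hmain : dist (xs (n+1)) (T (xs (n+1))) ≤
        dist (xs (n+1)) (T (ys n)) + dist (T (ys n)) (T (xs (n+1))) := by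
      rw [dist_comm (xs (n+1)) (T (ys n))] at *
      exact (dist_triangle _ _ _).trans (by rw [dist_comm (T (ys n)) (xs (n+1))])
    have t1 : (1 - l n) * dist (xs n) (T (ys n)) ≤ (1 - l n) * ((1 + s n) * cn) :=
      mul_le_mul_of_nonneg_left hH (by linarith [hl1 n])
    have t2 : l n * dist (ys n) (T (ys n)) ≤ l n * cn :=
      mul_le_mul_of_nonneg_left hG (hl0 n)
    have t3 : (1 - l n) * dist (ys n) (xs n) = (1 - l n) * (s n * cn) := by rw [hD]
    nlinarith [hmain, hA, hB, hC1]
  -- the quantitative statement (second conjunct), proved first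
  have key : ∀ θ : ℕ → ℕ,
      (∀ n : ℕ, (n : ℝ) ≤ ∑ i ∈ Finset.range (θ n + 1), l i * (1 - l i)) →
      ∀ L N₀ : ℕ, 1 ≤ L → (∀ n ≥ N₀, s n ≤ 1 - 1 / (L : ℝ)) →
      ∀ γ : ℝ → ℕ,
        (∀ ε : ℝ, 0 < ε → ∀ m : ℕ,
          |(∑ i ∈ Finset.range (γ ε + m + 1), s i * (1 - l i)) -
            ∑ i ∈ Finset.range (γ ε + 1), s i * (1 - l i)| < ε) →
      ∀ b : ℝ, 0 < b → (∃ p ∈ C, T p = p ∧ dist x p ≤ b) →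
      ∀ ε : ℝ, 0 < ε → ∀ n : ℕ,
        (if ε ≤ 4 * L * b then
          θ (⌈2 * L * (b + 1) / (ε * η b (ε / (2 * L * b)))⌉₊ + γ (ε / (8 * b)) + N₀ + 1)
        else γ (ε / (8 * b)) + N₀ + 1) ≤ n →
        dist (xs n) (T (xs n)) < ε := by
    rintro θ hθ L N₀ hL hLs γ hγ b hb ⟨p, hpC, hTp, hxp⟩ ε hε n hn
    have hLpos : (0:ℝ) < (L:ℝ) := by exact_mod_cast Nat.lt_of_lt_of_le Nat.zero_lt_one hL
    have hL1 : (1:ℝ) ≤ (L:ℝ) := by exact_mod_cast hL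
    have hdbp : ∀ i, dist (xs i) p ≤ b := fun i => (hdb p hpC hTp i).trans hxp
    have hc2b : ∀ i, dist (xs i) (T (xs i)) ≤ 2 * b := fun i =>
      (hc2 p hpC hTp i).trans (by linarith [hdbp i])
    -- cumulative version of (F2)
    have hsum2 : ∀ i m, i ≤ m → dist (xs m) (T (xs m)) ≤
        dist (xs i) (T (xs i)) + 4 * b * ∑ j ∈ Finset.Ico i m, s j * (1 - l j) := by
      intro i m him
      induction m, him using Nat.le_induction with
      | base => simp
      | succ m him ih =>
          have h1 := hF2 m
          have h2 : 2 * (s m * (1 - l m)) * dist (xs m) (T (xs m)) ≤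
              4 * b * (s m * (1 - l m)) := by
            have := hc2b m
            nlinarith [hslnn m]
          rw [Finset.sum_Ico_succ_top him]
          linarith
    by_cases hcase : ε ≤ 4 * L * b
    · -- main case
      rw [if_pos hcase] at hn
      set ε' := ε / (2 * L * b) with hε'
      have hden : (0:ℝ) < 2 * L * b := by positivity
      have hε'Ioc : ε' ∈ Set.Ioc (0:ℝ) 2 := by
        constructor
        · exact div_pos hε hden
        · rw [hε', div_le_iff₀ hden]; linarith
      have hηb := hU.1 b ε' hb hε'Ioc
      set g := γ (ε / (8 * b)) with hg
      set N := g + N₀ + 1 with hN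
      set D := ⌈2 * L * (b + 1) / (ε * η b ε')⌉₊ with hD
      set K := θ (D + N) with hK
      have hDN : D + N = D + g + N₀ + 1 := by omega
      have hn' : K ≤ n := by rw [hK, hDN]; exact hn
      -- (F3): drop of dist to p when the displacement is big
      have hF3 : ∀ i, N₀ ≤ i → ε / 2 ≤ dist (xs i) (T (xs i)) →
          dist (xs (i+1)) p ≤ dist (xs i) p - ε / 2 * η b ε' * (l i * (1 - l i)) := by
        intro i hiN hci
        set di := dist (xs i) p with hdi
        have hdi4 : ε / 4 ≤ di := by
          have := hc2 p hpC hTp i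
          linarith
        have hdipos : 0 < di := by linarith
        have hdib : di ≤ b := hdbp i
        have hTyC : dist (T (ys i)) p ≤ di := by
          have h2 : dist (T (ys i)) (T p) ≤ dist (ys i) p := hTne (ys i) (hyC i) p hpC
          rw [hTp] at h2
          exact h2.trans (hyp_le p hpC hTp i)
        have hxTy : ε / (2 * L) ≤ dist (xs i) (T (ys i)) := by
          have htri : dist (xs i) (T (xs i)) ≤
              dist (xs i) (T (ys i)) + dist (T (ys i)) (T (xs i)) := dist_triangle _ _ _
          have hTT : dist (T (ys i)) (T (xs i)) ≤ s i * dist (xs i) (T (xs i)) := by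
            have h := hTne (ys i) (hyC i) (xs i) (hxC i)
            have h2 : dist (ys i) (xs i) = s i * dist (xs i) (T (xs i)) := by
              rw [hys i, dist_comm]; exact H.dist_left _ _ (hs i)
            rw [h2] at h; exact h
          have hsi : s i ≤ 1 - 1 / (L:ℝ) := hLs i hiN
          have h1L : 0 < 1 / (L:ℝ) := by positivity
          -- (1 - s i) * c i ≥ (1/L) * (ε/2)
          have : (1 - s i) * dist (xs i) (T (xs i)) ≤ dist (xs i) (T (ys i)) := by
            nlinarith
          have h4 : 1 / (L:ℝ) * (ε / 2) ≤ (1 - s i) * dist (xs i) (T (xs i)) := by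
            have hsi' : 1 / (L:ℝ) ≤ 1 - s i := by linarith
            have : 0 < dist (xs i) (T (xs i)) := by linarith
            nlinarith
          calc ε / (2 * L) = 1 / (L:ℝ) * (ε / 2) := by ring
            _ ≤ (1 - s i) * dist (xs i) (T (xs i)) := h4
            _ ≤ dist (xs i) (T (ys i)) := this
        have hxy' : ε' * di ≤ dist (xs i) (T (ys i)) := by
          calc ε' * di ≤ ε' * b := by
                have : 0 < ε' := hε'Ioc.1
                nlinarith
            _ = ε / (2 * L) := by rw [hε']; field_simp
            _ ≤ _ := hxTy
        have huc := H.uc_general hU p (xs i) (T (ys i)) hdipos hε'Ioc (hl i)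
          (le_refl di) hTyC hxy'
        have hmon' : η b ε' ≤ η di ε' := hmon di b ε' hdipos hdib hε'Ioc
        have hη0 : 0 < η b ε' := hηb.1
        rw [hrec i]
        calc dist (H.W (xs i) (T (ys i)) (l i)) p
            ≤ (1 - 2 * l i * (1 - l i) * η di ε') * di := huc
          _ ≤ di - ε / 2 * η b ε' * (l i * (1 - l i)) := by
              have h1 : η b ε' * (ε/4) ≤ η di ε' * di :=
                mul_le_mul hmon' hdi4 (by positivity) (hη0.le.trans hmon')
              have h2 : (0:ℝ) ≤ 2 * (l i * (1 - l i)) := by linarith [hllnn i]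
              nlinarith [mul_le_mul_of_nonneg_left h1 h2]
      -- telescoping
      have htel : ∀ Kk, N ≤ Kk → (∀ i, N ≤ i → i ≤ Kk → ε / 2 ≤ dist (xs i) (T (xs i))) →
          ε / 2 * η b ε' * ∑ i ∈ Finset.Ico N (Kk+1), l i * (1 - l i) ≤
            dist (xs N) p - dist (xs (Kk+1)) p := by
        intro Kk hNK hbig
        induction Kk, hNK using Nat.le_induction with
        | base =>
            have h := hF3 N (by omega) (hbig N le_rfl le_rfl)
            rw [Finset.sum_Ico_succ_top le_rfl, Finset.Ico_self, Finset.sum_empty]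
            simpa using by linarith
        | succ m hm ih =>
            have ih' := ih (fun i hi him => hbig i hi (by omega))
            have h := hF3 (m+1) (by omega) (hbig (m+1) (by omega) le_rfl)
            rw [Finset.sum_Ico_succ_top (by omega : N ≤ m + 1)]
            have hterm : 0 ≤ l (m+1) * (1 - l (m+1)) := hllnn (m+1)
            nlinarith [hηb.1]
      -- there is a good index in [N, K]
      have hexists : ∃ i, N ≤ i ∧ i ≤ K ∧ dist (xs i) (T (xs i)) < ε / 2 := by
        by_contra hcon
        push_neg at hcon
        have hcon' : ∀ i, N ≤ i → i ≤ K → ε / 2 ≤ dist (xs i) (T (xs i)) := hcon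
        have hθK := hθ (D + N)
        rw [← hK] at hθK
        have hsumub : ∀ M : ℕ, ∑ i ∈ Finset.range M, l i * (1 - l i) ≤ (M:ℝ) := by
          intro M
          calc ∑ i ∈ Finset.range M, l i * (1 - l i) ≤ ∑ i ∈ Finset.range M, (1:ℝ) :=
                Finset.sum_le_sum (fun i _ => hll1 i)
            _ = M := by simp
        have hDpos : 1 ≤ D := by
          rw [hD]
          have : (0:ℝ) < 2 * L * (b + 1) / (ε * η b ε') :=
            div_pos (by positivity) (mul_pos hε hηb.1)
          exact Nat.ceil_pos.mpr this
        have hNK : N ≤ K := by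
          have h1 : ((D + N : ℕ) : ℝ) ≤ (K:ℝ) + 1 := hθK.trans (by
            have := hsumub (K+1); push_cast at this ⊢; linarith)
          have h2 : D + N ≤ K + 1 := by exact_mod_cast h1
          omega
        have hsplit : ∑ i ∈ Finset.Ico N (K+1), l i * (1 - l i) =
            (∑ i ∈ Finset.range (K+1), l i * (1 - l i)) -
              ∑ i ∈ Finset.range N, l i * (1 - l i) := by
          rw [Finset.sum_Ico_eq_sub _ (by omega)]
        have hge : 2 * L * (b + 1) / (ε * η b ε') ≤
            ∑ i ∈ Finset.Ico N (K+1), l i * (1 - l i) := by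
          have h1 := hsumub N
          have h2 : ((D:ℝ) + N) ≤ ∑ i ∈ Finset.range (K+1), l i * (1 - l i) := by
            have := hθK; push_cast at this ⊢; linarith
          have h3 := Nat.le_ceil (2 * L * (b + 1) / (ε * η b ε'))
          rw [hsplit]
          rw [← hD] at h3
          linarith
        have htel' := htel K hNK hcon'
        have hub : dist (xs N) p - dist (xs (K+1)) p ≤ b := by
          have := hdbp N
          have := dist_nonneg (x := xs (K+1)) (y := p)
          linarith
        have hprod : ε / 2 * η b ε' * (2 * L * (b + 1) / (ε * η b ε')) = L * (b + 1) := by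
          have hne : ε * η b ε' ≠ 0 := (mul_pos hε hηb.1).ne'
          field_simp
          ring_nf
          exact mul_inv_cancel₀ hηb.1.ne'
        have hfin : (L:ℝ) * (b + 1) ≤ b := by
          have hnn : 0 ≤ ε / 2 * η b ε' := (mul_pos (by linarith : (0:ℝ) < ε / 2) hηb.1).le
          have := mul_le_mul_of_nonneg_left hge hnn
          rw [hprod] at this
          linarith
        nlinarith
      obtain ⟨i0, hi0N, hi0K, hi0c⟩ := hexists
      have hi0n : i0 ≤ n := hi0K.trans hn'
      -- tail sum bound
      have htail : ∑ j ∈ Finset.Ico i0 n, s j * (1 - l j) < ε / (8 * b) := by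
        have hgn : g + 1 ≤ n := by omega
        have hsub : Finset.Ico i0 n ⊆ Finset.Ico (g+1) n :=
          Finset.Ico_subset_Ico (by omega) le_rfl
        have h1 : ∑ j ∈ Finset.Ico i0 n, s j * (1 - l j) ≤
            ∑ j ∈ Finset.Ico (g+1) n, s j * (1 - l j) :=
          Finset.sum_le_sum_of_subset_of_nonneg hsub (fun j _ _ => hslnn j)
        have hm : g + (n - (g+1)) + 1 = n := by omega
        have h2 := hγ (ε / (8 * b)) (by positivity) (n - (g+1))
        rw [← hg] at h2
        rw [hm] at h2
        have h3 : ∑ j ∈ Finset.Ico (g+1) n, s j * (1 - l j) =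
            (∑ i ∈ Finset.range n, s i * (1 - l i)) -
              ∑ i ∈ Finset.range (g+1), s i * (1 - l i) := by
          rw [Finset.sum_Ico_eq_sub _ (by omega)]
        calc ∑ j ∈ Finset.Ico i0 n, s j * (1 - l j)
            ≤ ∑ j ∈ Finset.Ico (g+1) n, s j * (1 - l j) := h1
          _ ≤ |(∑ i ∈ Finset.range n, s i * (1 - l i)) -
              ∑ i ∈ Finset.range (g+1), s i * (1 - l i)| := by
                rw [h3]; exact le_abs_self _
          _ < ε / (8 * b) := h2
      have hfinal := hsum2 i0 n hi0n
      have h4b : 4 * b * ∑ j ∈ Finset.Ico i0 n, s j * (1 - l j) < 4 * b * (ε / (8 * b)) :=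
        mul_lt_mul_of_pos_left htail (by positivity)
      have heq : 4 * b * (ε / (8 * b)) = ε / 2 := by field_simp; ring
      linarith
    · -- easy case: ε > 4Lb
      rw [if_neg hcase] at hn
      push_neg at hcase
      have := hc2b n
      nlinarith
  refine ⟨?_, key⟩
  -- derive the convergence statement from `key`
  obtain ⟨p, hpC, hTp⟩ := hfix
  set b : ℝ := dist x p + 1 with hbdef
  have hb : 0 < b := by have := dist_nonneg (x := x) (y := p); rw [hbdef]; linarith
  -- a rate of divergence
  have hdivT : Tendsto (fun n => ∑ i ∈ Finset.range n, l i * (1 - l i)) atTop atTop :=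
    (not_summable_iff_tendsto_nat_atTop_of_nonneg hllnn).mp hdiv
  have hθex : ∀ n : ℕ, ∃ N : ℕ, (n:ℝ) ≤ ∑ i ∈ Finset.range (N + 1), l i * (1 - l i) := by
    intro n
    obtain ⟨M, hM⟩ := eventually_atTop.mp (hdivT.eventually_ge_atTop (n:ℝ))
    exact ⟨M, hM (M+1) (by omega)⟩
  set θ : ℕ → ℕ := fun n => (hθex n).choose with hθdef
  have hθ : ∀ n : ℕ, (n:ℝ) ≤ ∑ i ∈ Finset.range (θ n + 1), l i * (1 - l i) :=
    fun n => (hθex n).choose_spec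
  -- L and N₀
  have hbdd : Filter.IsBoundedUnder (· ≤ ·) atTop s :=
    Filter.isBoundedUnder_of ⟨1, fun n => hs1 n⟩
  have hq : limsup s atTop < (limsup s atTop + 1) / 2 := by linarith
  have hq1 : (limsup s atTop + 1) / 2 < 1 := by linarith
  set q := (limsup s atTop + 1) / 2 with hqdef
  have hev : ∀ᶠ n in atTop, s n < q := Filter.eventually_lt_of_limsup_lt hq hbdd
  obtain ⟨N₀, hN₀⟩ := eventually_atTop.mp hev
  set L : ℕ := max 1 ⌈1 / (1 - q)⌉₊ with hLdef
  have hL : 1 ≤ L := le_max_left _ _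
  have hLpos : (0:ℝ) < (L:ℝ) := by
    have : (1:ℝ) ≤ (L:ℝ) := by exact_mod_cast hL
    linarith
  have hLs : ∀ n ≥ N₀, s n ≤ 1 - 1 / (L:ℝ) := by
    intro n hn
    have h1q : (0:ℝ) < 1 - q := by linarith
    have hceil : 1 / (1 - q) ≤ (L:ℝ) := by
      calc (1:ℝ) / (1 - q) ≤ (⌈1 / (1 - q)⌉₊ : ℝ) := Nat.le_ceil _
        _ ≤ (L:ℝ) := by exact_mod_cast le_max_right 1 ⌈1 / (1 - q)⌉₊
    have h2 : 1 / (L:ℝ) ≤ 1 - q := by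
      rw [div_le_iff₀ hLpos]
      have := mul_le_mul_of_nonneg_left hceil h1q.le
      calc (1:ℝ) = (1 - q) * (1 / (1 - q)) := by field_simp
        _ ≤ (1 - q) * (L:ℝ) := mul_le_mul_of_nonneg_left hceil h1q.le
    have := hN₀ n hn
    linarith
  -- a Cauchy modulus
  have hγex : ∀ e : ℝ, 0 < e → ∃ N : ℕ, ∀ m : ℕ,
      |(∑ i ∈ Finset.range (N + m + 1), s i * (1 - l i)) -
        ∑ i ∈ Finset.range (N + 1), s i * (1 - l i)| < e := by
    intro e he
    set S := ∑' i, s i * (1 - l i) with hS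
    have htend : Tendsto (fun n => ∑ i ∈ Finset.range n, s i * (1 - l i)) atTop (nhds S) :=
      hconv.hasSum.tendsto_sum_nat
    have hevS : ∀ᶠ n in atTop,
        S - e < ∑ i ∈ Finset.range n, s i * (1 - l i) :=
      htend.eventually (eventually_gt_nhds (by linarith))
    obtain ⟨M, hM⟩ := eventually_atTop.mp hevS
    refine ⟨M, fun m => ?_⟩
    have hle : ∀ k : ℕ, ∑ i ∈ Finset.range k, s i * (1 - l i) ≤ S :=
      fun k => Summable.sum_le_tsum _ (fun i _ => hslnn i) hconv
    have hmono : (∑ i ∈ Finset.range (M + 1), s i * (1 - l i)) ≤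
        ∑ i ∈ Finset.range (M + m + 1), s i * (1 - l i) := by
      apply Finset.sum_le_sum_of_subset_of_nonneg
      · exact Finset.range_subset_range.mpr (by omega)
      · exact fun i _ _ => hslnn i
    have h1 := hM (M + 1) (by omega)
    have h2 := hle (M + m + 1)
    rw [abs_of_nonneg (by linarith)]
    linarith
  set γ : ℝ → ℕ := fun e => if he : 0 < e then (hγex e he).choose else 0 with hγdef
  have hγ : ∀ e : ℝ, 0 < e → ∀ m : ℕ,
      |(∑ i ∈ Finset.range (γ e + m + 1), s i * (1 - l i)) -
        ∑ i ∈ Finset.range (γ e + 1), s i * (1 - l i)| < e := by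
    intro e he m
    have : γ e = (hγex e he).choose := by rw [hγdef]; simp [he]
    rw [this]
    exact (hγex e he).choose_spec m
  -- conclude
  rw [Metric.tendsto_atTop]
  intro ε hε
  refine ⟨(if ε ≤ 4 * L * b then
      θ (⌈2 * L * (b + 1) / (ε * η b (ε / (2 * L * b)))⌉₊ + γ (ε / (8 * b)) + N₀ + 1)
    else γ (ε / (8 * b)) + N₀ + 1), fun n hn => ?_⟩
  have := key θ hθ L N₀ hL hLs γ hγ b hb ⟨p, hpC, hTp, by rw [hbdef]; linarith⟩ ε hε n hn
  rw [Real.dist_eq, sub_zero, abs_of_nonneg dist_nonneg]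
  exact this
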